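/- Let a₋₁ > 0, a₀ ≥ 0, a₁ ≥ 0, a₂ > 0, b ≥ 0, δ ≥ 0, λ ≥ 0, ρ > 1, γ > 1 and 0 < θ < 1. Then there exists a constant K₅ > 0 such that for all y > 0: V(y) + LV(y) + λ·(V(y + δy) − V(y)) ≤ K₅. -/
import Mathlib

set_option maxHeartbeats 1000000

lemma ait_boundA (am1 a₀ θ : ℝ) (ham1 : 0 < am1) (ha₀ : 0 ≤ a₀)
    (hθ0 : 0 < θ) (hθ1 : θ < 1) :
    ∃ KA : ℝ, 0 ≤ KA ∧ ∀ y : ℝ, 0 < y →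
      θ * am1 * (y ^ θ * y⁻¹ * y⁻¹ - y⁻¹ * y⁻¹) + θ * a₀ * y⁻¹ - θ * Real.log y ≤ KA := by
  have hm : (0:ℝ) < 1 - (1/2:ℝ) ^ θ := by
    have := Real.rpow_lt_one (x := (1/2:ℝ)) (by norm_num) (by norm_num) hθ0
    linarith
  set m : ℝ := 1 - (1/2:ℝ) ^ θ with hmdef
  set c : ℝ := min (1/2) (am1 * m / (a₀ + 1)) with hcdef
  have hc0 : 0 < c := lt_min (by norm_num) (by positivity)
  refine ⟨θ * (am1 + a₀) + θ * (a₀ + 1) / c, by positivity, ?_⟩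
  intro y hy
  have hyinv : 0 < y⁻¹ := by positivity
  have hvv : 0 < y⁻¹ * y⁻¹ := mul_pos hyinv hyinv
  have hlog : -Real.log y ≤ y⁻¹ - 1 := by
    have := Real.log_le_sub_one_of_pos hyinv
    rwa [Real.log_inv] at this
  have hlogθ : θ * (-Real.log y) ≤ θ * (y⁻¹ - 1) :=
    mul_le_mul_of_nonneg_left hlog hθ0.le
  have hKnn : (0:ℝ) ≤ θ * (am1 + a₀) + θ * (a₀ + 1) / c := by positivity
  rcases le_total y c with h | h
  · -- y ≤ c : whole thing is ≤ 0
    have hy2 : y ≤ 1/2 := h.trans (min_le_left _ _)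
    have hu : y ^ θ ≤ (1/2:ℝ) ^ θ := Real.rpow_le_rpow hy.le hy2 hθ0.le
    have hyc : y ≤ am1 * m / (a₀ + 1) := h.trans (min_le_right _ _)
    have h' : y * (a₀ + 1) ≤ am1 * m := by
      rw [← le_div_iff₀ (by positivity)]; exact hyc
    have hkey : a₀ + 1 ≤ am1 * m * y⁻¹ := by
      have := mul_le_mul_of_nonneg_right h' hyinv.le
      calc a₀ + 1 = y * (a₀ + 1) * y⁻¹ := by
            field_simp
        _ ≤ am1 * m * y⁻¹ := this
    have hb1 : θ * am1 * (y ^ θ * y⁻¹ * y⁻¹ - y⁻¹ * y⁻¹)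
        ≤ -(θ * am1 * m) * (y⁻¹ * y⁻¹) := by
      have h1 : y ^ θ - 1 ≤ -m := by simp only [hmdef]; linarith
      have h2 : (y ^ θ - 1) * (y⁻¹ * y⁻¹) ≤ -m * (y⁻¹ * y⁻¹) :=
        mul_le_mul_of_nonneg_right h1 hvv.le
      have h3 := mul_le_mul_of_nonneg_left h2 (by positivity : (0:ℝ) ≤ θ * am1)
      nlinarith [h3]
    have hkey2 := mul_le_mul_of_nonneg_left hkey
      (mul_nonneg hθ0.le hyinv.le)
    have : θ * am1 * (y ^ θ * y⁻¹ * y⁻¹ - y⁻¹ * y⁻¹) + θ * a₀ * y⁻¹ - θ * Real.log y ≤ 0 := by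
      nlinarith [hb1, hkey2, hlogθ, hθ0]
    linarith
  · rcases le_total y 1 with h1 | h1
    · -- c ≤ y ≤ 1
      have hu : y ^ θ ≤ 1 := Real.rpow_le_one hy.le h1 hθ0.le
      have h5 : (y ^ θ - 1) * (y⁻¹ * y⁻¹) ≤ 0 :=
        mul_nonpos_of_nonpos_of_nonneg (by linarith) hvv.le
      have t1 : θ * am1 * (y ^ θ * y⁻¹ * y⁻¹ - y⁻¹ * y⁻¹) ≤ 0 := by
        nlinarith [mul_le_mul_of_nonneg_left h5 (by positivity : (0:ℝ) ≤ θ * am1)]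
      have hic : y⁻¹ ≤ c⁻¹ := inv_anti₀ hc0 h
      have t2 : θ * a₀ * y⁻¹ - θ * Real.log y ≤ θ * (a₀ + 1) / c := by
        rw [div_eq_mul_inv]
        have m1 := mul_le_mul_of_nonneg_left hic (mul_nonneg hθ0.le ha₀)
        have m2 := mul_le_mul_of_nonneg_left hic hθ0.le
        nlinarith [hlogθ, hθ0]
      nlinarith [t1, t2, hθ0, ham1, ha₀]
    · -- 1 ≤ y
      have hu : y ^ θ ≤ y := by
        calc y ^ θ ≤ y ^ (1:ℝ) := Real.rpow_le_rpow_of_exponent_le h1 hθ1.le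
        _ = y := Real.rpow_one y
      have hyi : y⁻¹ ≤ 1 := by
        rw [inv_le_one_iff₀]; right; exact h1
      have hup : 0 < y ^ θ := Real.rpow_pos_of_pos hy θ
      have t1 : y ^ θ * y⁻¹ ≤ 1 := by
        calc y ^ θ * y⁻¹ ≤ y * y⁻¹ := mul_le_mul_of_nonneg_right hu hyinv.le
        _ = 1 := mul_inv_cancel₀ (ne_of_gt hy)
      have t1' : y ^ θ * y⁻¹ * y⁻¹ ≤ 1 := by
        calc y ^ θ * y⁻¹ * y⁻¹ ≤ 1 * y⁻¹ := mul_le_mul_of_nonneg_right t1 hyinv.le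
        _ = y⁻¹ := one_mul _
        _ ≤ 1 := hyi
      have t2 : θ * am1 * (y ^ θ * y⁻¹ * y⁻¹ - y⁻¹ * y⁻¹) ≤ θ * am1 := by
        have h6 : y ^ θ * y⁻¹ * y⁻¹ - y⁻¹ * y⁻¹ ≤ 1 := by linarith
        have := mul_le_mul_of_nonneg_left h6 (by positivity : (0:ℝ) ≤ θ * am1)
        linarith
      have t3 : θ * a₀ * y⁻¹ ≤ θ * a₀ := by
        nlinarith [mul_nonneg hθ0.le ha₀, hyi]
      have t4 : 0 ≤ Real.log y := Real.log_nonneg h1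
      have t5 : (0:ℝ) ≤ θ * (a₀ + 1) / c := by positivity
      nlinarith [t2, t3, t4, hθ0]

lemma ait_boundB (a₂ C γ θ : ℝ) (ha₂ : 0 < a₂) (hC : 0 < C)
    (hγ : 1 < γ) (hθ0 : 0 < θ) (hθ1 : θ < 1) :
    ∃ KB : ℝ, 0 ≤ KB ∧ ∀ y : ℝ, 0 < y →
      θ * a₂ * (y ^ γ * y⁻¹ - y ^ θ * (y ^ γ * y⁻¹)) + C * y ^ θ ≤ KB := by
  set M : ℝ := max 1 (max ((2:ℝ) ^ θ⁻¹) ((2 * C / (θ * a₂)) ^ (γ - 1)⁻¹)) with hMdef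
  have hM1 : (1:ℝ) ≤ M := le_max_left _ _
  have hMθ : (1:ℝ) ≤ M ^ θ := Real.one_le_rpow hM1 hθ0.le
  refine ⟨θ * a₂ + C * M ^ θ, by positivity, ?_⟩
  intro y hy
  have hyinv : 0 < y⁻¹ := by positivity
  have hu : 0 < y ^ θ := Real.rpow_pos_of_pos hy θ
  have hw : 0 < y ^ γ := Real.rpow_pos_of_pos hy γ
  have hP : 0 < y ^ γ * y⁻¹ := mul_pos hw hyinv
  rcases le_total y 1 with h1 | h1
  · -- y ≤ 1
    have hwy : y ^ γ ≤ y := by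
      calc y ^ γ ≤ y ^ (1:ℝ) := Real.rpow_le_rpow_of_exponent_ge hy h1 hγ.le
      _ = y := Real.rpow_one y
    have hP1 : y ^ γ * y⁻¹ ≤ 1 := by
      calc y ^ γ * y⁻¹ ≤ y * y⁻¹ := mul_le_mul_of_nonneg_right hwy hyinv.le
      _ = 1 := mul_inv_cancel₀ (ne_of_gt hy)
    have hu1 : y ^ θ ≤ 1 := Real.rpow_le_one hy.le h1 hθ0.le
    have t1 : θ * a₂ * (y ^ γ * y⁻¹ - y ^ θ * (y ^ γ * y⁻¹)) ≤ θ * a₂ := by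
      have h6 : y ^ γ * y⁻¹ - y ^ θ * (y ^ γ * y⁻¹) ≤ 1 := by nlinarith [mul_pos hu hP]
      nlinarith [mul_le_mul_of_nonneg_left h6 (by positivity : (0:ℝ) ≤ θ * a₂)]
    have t2 : C * y ^ θ ≤ C * M ^ θ := by nlinarith [hu1, hMθ, hC]
    linarith
  · rcases le_total y M with h2 | h2
    · -- 1 ≤ y ≤ M
      have hu1 : 1 ≤ y ^ θ := Real.one_le_rpow h1 hθ0.le
      have t1 : θ * a₂ * (y ^ γ * y⁻¹ - y ^ θ * (y ^ γ * y⁻¹)) ≤ 0 := by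
        have h6 : y ^ γ * y⁻¹ - y ^ θ * (y ^ γ * y⁻¹) ≤ 0 := by nlinarith [hP]
        nlinarith [mul_le_mul_of_nonneg_left h6 (by positivity : (0:ℝ) ≤ θ * a₂)]
      have t2 : C * y ^ θ ≤ C * M ^ θ := by
        have := Real.rpow_le_rpow hy.le h2 hθ0.le
        nlinarith [hC]
      nlinarith [hθ0, ha₂]
    · -- M ≤ y : expression ≤ 0
      have hy2 : (2:ℝ) ^ θ⁻¹ ≤ y := le_trans (le_trans (le_max_left _ _) (le_max_right _ _)) h2
      have hu2 : (2:ℝ) ≤ y ^ θ := by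
        have := Real.rpow_le_rpow (by positivity) hy2 hθ0.le
        rwa [Real.rpow_inv_rpow (by norm_num) (ne_of_gt hθ0)] at this
      have hx0 : (0:ℝ) < 2 * C / (θ * a₂) := by positivity
      have hy3 : (2 * C / (θ * a₂)) ^ (γ - 1)⁻¹ ≤ y :=
        le_trans (le_trans (le_max_right _ _) (le_max_right _ _)) h2
      have hP2 : 2 * C / (θ * a₂) ≤ y ^ (γ - 1) := by
        have := Real.rpow_le_rpow (by positivity) hy3 (by linarith : (0:ℝ) ≤ γ - 1)
        rwa [Real.rpow_inv_rpow hx0.le (by intro hh; linarith [hh] : γ - 1 ≠ 0)] at this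
      have hPE : y ^ (γ - 1) = y ^ γ * y⁻¹ := by
        rw [Real.rpow_sub hy, Real.rpow_one, div_eq_mul_inv]
      rw [hPE] at hP2
      have hkey : 2 * C ≤ θ * a₂ * (y ^ γ * y⁻¹) := by
        rw [div_le_iff₀ (by positivity)] at hP2
        linarith
      have : θ * a₂ * (y ^ γ * y⁻¹ - y ^ θ * (y ^ γ * y⁻¹)) + C * y ^ θ ≤ 0 := by
        nlinarith [mul_le_mul_of_nonneg_right hkey hu.le,
          mul_le_mul_of_nonneg_right hu2 (mul_nonneg (mul_nonneg hθ0.le ha₂.le) hP.le)]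
      nlinarith [hθ0, ha₂, hC, hMθ]

lemma ait_boundD (b θ ρ : ℝ) (hb : 0 ≤ b) (hθ0 : 0 < θ) (hθ1 : θ < 1) (hρ : 1 < ρ) :
    ∃ KD : ℝ, 0 ≤ KD ∧ ∀ y : ℝ, 0 < y →
      (1/2) * θ * b ^ 2 * (y ^ ρ * y ^ ρ * y⁻¹ * y⁻¹
        - (1 - θ) * (y ^ θ * (y ^ ρ * y ^ ρ * y⁻¹ * y⁻¹))) ≤ KD := by
  have h1θ : (0:ℝ) < 1 - θ := by linarith
  set N : ℝ := ((1 - θ)⁻¹) ^ θ⁻¹ with hNdef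
  have hN0 : 0 < N := Real.rpow_pos_of_pos (by positivity) _
  refine ⟨(1/2) * θ * b ^ 2 * N ^ (2 * ρ - 2), by positivity, ?_⟩
  intro y hy
  have hyinv : 0 < y⁻¹ := by positivity
  have hu : 0 < y ^ θ := Real.rpow_pos_of_pos hy θ
  have hr : 0 < y ^ ρ := Real.rpow_pos_of_pos hy ρ
  have hQpos : 0 < y ^ ρ * y ^ ρ * y⁻¹ * y⁻¹ := by positivity
  have hQE : y ^ (2 * ρ - 2) = y ^ ρ * y ^ ρ * y⁻¹ * y⁻¹ := by
    rw [show (2 * ρ - 2 : ℝ) = ρ + (ρ + (-1 + -1)) by ring,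
      Real.rpow_add hy, Real.rpow_add hy, Real.rpow_add hy, Real.rpow_neg_one]
    ring
  rcases le_total y N with h | h
  · have hQb : y ^ ρ * y ^ ρ * y⁻¹ * y⁻¹ ≤ N ^ (2 * ρ - 2) := by
      rw [← hQE]
      exact Real.rpow_le_rpow hy.le h (by linarith)
    have hpos : 0 ≤ (1 - θ) * (y ^ θ * (y ^ ρ * y ^ ρ * y⁻¹ * y⁻¹)) := by positivity
    nlinarith [mul_le_mul_of_nonneg_left hQb (by positivity : (0:ℝ) ≤ (1/2) * θ * b ^ 2),
      mul_nonneg (by positivity : (0:ℝ) ≤ (1/2) * θ * b ^ 2) hpos]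
  · -- N ≤ y : expression ≤ 0
    have hu2 : (1 - θ)⁻¹ ≤ y ^ θ := by
      have := Real.rpow_le_rpow hN0.le h hθ0.le
      rwa [hNdef, Real.rpow_inv_rpow (by positivity) (ne_of_gt hθ0)] at this
    have hkey : 1 ≤ (1 - θ) * y ^ θ := by
      rw [inv_le_iff_one_le_mul₀ h1θ] at hu2
      linarith
    have : (1/2) * θ * b ^ 2 * (y ^ ρ * y ^ ρ * y⁻¹ * y⁻¹
        - (1 - θ) * (y ^ θ * (y ^ ρ * y ^ ρ * y⁻¹ * y⁻¹))) ≤ 0 := by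
      nlinarith [mul_le_mul_of_nonneg_right hkey hQpos.le,
        mul_nonneg (mul_nonneg (by linarith : (0:ℝ) ≤ (1/2) * θ) (sq_nonneg b)) hQpos.le]
    have hKD : (0:ℝ) ≤ (1/2) * θ * b ^ 2 * N ^ (2 * ρ - 2) := by positivity
    linarith



/-- Key estimate in the proof of stochastic boundedness of the generalized Ait-Sahalia model
with Poisson jumps: `V(y) + LV(y) + λ(V(y+δy) - V(y))` is bounded above on `(0, ∞)`, where
`V(y) = y^θ - 1 - θ log y`, `LV(y) = V'(y)f(y) + (1/2)V''(y)g(y)²` with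
`f(y) = a₋₁ y⁻¹ - a₀ + a₁ y - a₂ y^γ`, `g(y) = b y^ρ`, `V'(y) = θ(y^{θ-1} - y⁻¹)` and
`V''(y) = θ((θ-1)y^{θ-2} + y^{-2})`. Here `am1` stands for `a₋₁` and `lam` for `λ`. -/
theorem ait_sahalia_stochastic_boundedness_drift_bound
    (am1 a₀ a₁ a₂ b δ lam ρ γ θ : ℝ)
    (ham1 : 0 < am1) (ha₀ : 0 ≤ a₀) (ha₁ : 0 ≤ a₁) (ha₂ : 0 < a₂)
    (hb : 0 ≤ b) (hδ : 0 ≤ δ) (hlam : 0 ≤ lam)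
    (hρ : 1 < ρ) (hγ : 1 < γ) (hθ0 : 0 < θ) (hθ1 : θ < 1) :
    ∃ K₅ : ℝ, 0 < K₅ ∧ ∀ y : ℝ, 0 < y →
      (y ^ θ - 1 - θ * Real.log y)
        + (θ * (y ^ (θ - 1) - y⁻¹) * (am1 * y⁻¹ - a₀ + a₁ * y - a₂ * y ^ γ)
            + (1 / 2) * (θ * ((θ - 1) * y ^ (θ - 2) + y ^ (-2 : ℝ))) * (b * y ^ ρ) ^ 2)
        + lam * ((((1 + δ) * y) ^ θ - 1 - θ * Real.log ((1 + δ) * y))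
            - (y ^ θ - 1 - θ * Real.log y)) ≤ K₅ := by
  have hδ1 : (0:ℝ) < 1 + δ := by linarith
  have hδθ : (1:ℝ) ≤ (1 + δ) ^ θ := Real.one_le_rpow (by linarith) hθ0.le
  set C : ℝ := 1 + θ * a₁ + lam * ((1 + δ) ^ θ - 1) with hCdef
  have hC : 0 < C := by nlinarith [mul_nonneg hlam (by linarith : (0:ℝ) ≤ (1+δ)^θ - 1)]
  obtain ⟨KA, hKA0, hKA⟩ := ait_boundA am1 a₀ θ ham1 ha₀ hθ0 hθ1
  obtain ⟨KB, hKB0, hKB⟩ := ait_boundB a₂ C γ θ ha₂ hC hγ hθ0 hθ1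
  obtain ⟨KD, hKD0, hKD⟩ := ait_boundD b θ ρ hb hθ0 hθ1 hρ
  refine ⟨KA + KB + KD + 1, by positivity, ?_⟩
  intro y hy
  have hy' : y ≠ 0 := ne_of_gt hy
  have e1 : y ^ (θ - 1) = y ^ θ * y⁻¹ := by
    rw [Real.rpow_sub hy, Real.rpow_one, div_eq_mul_inv]
  have e3 : y ^ (-2:ℝ) = y⁻¹ * y⁻¹ := by
    rw [show (-2:ℝ) = -1 + -1 by norm_num, Real.rpow_add hy, Real.rpow_neg_one]
  have e2 : y ^ (θ - 2) = y ^ θ * (y⁻¹ * y⁻¹) := by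
    rw [show (θ - 2 : ℝ) = θ + (-2:ℝ) by ring, Real.rpow_add hy, e3]
  have e4 : ((1 + δ) * y) ^ θ = (1 + δ) ^ θ * y ^ θ :=
    Real.mul_rpow hδ1.le hy.le
  have e5 : Real.log ((1 + δ) * y) = Real.log (1 + δ) + Real.log y :=
    Real.log_mul (ne_of_gt hδ1) hy'
  rw [e1, e2, e3, e4, e5]
  have key : (y ^ θ - 1 - θ * Real.log y)
        + (θ * (y ^ θ * y⁻¹ - y⁻¹) * (am1 * y⁻¹ - a₀ + a₁ * y - a₂ * y ^ γ)
            + (1 / 2) * (θ * ((θ - 1) * (y ^ θ * (y⁻¹ * y⁻¹)) + y⁻¹ * y⁻¹)) * (b * y ^ ρ) ^ 2)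
        + lam * (((1 + δ) ^ θ * y ^ θ - 1 - θ * (Real.log (1 + δ) + Real.log y))
            - (y ^ θ - 1 - θ * Real.log y))
      = (θ * am1 * (y ^ θ * y⁻¹ * y⁻¹ - y⁻¹ * y⁻¹) + θ * a₀ * y⁻¹ - θ * Real.log y)
        + (θ * a₂ * (y ^ γ * y⁻¹ - y ^ θ * (y ^ γ * y⁻¹)) + C * y ^ θ)
        + ((1/2) * θ * b ^ 2 * (y ^ ρ * y ^ ρ * y⁻¹ * y⁻¹
            - (1 - θ) * (y ^ θ * (y ^ ρ * y ^ ρ * y⁻¹ * y⁻¹))))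
        + (-1 - θ * a₁ - θ * a₀ * (y ^ θ * y⁻¹) - lam * θ * Real.log (1 + δ)) := by
    rw [hCdef]
    field_simp
    ring
  rw [key]
  have hR : -1 - θ * a₁ - θ * a₀ * (y ^ θ * y⁻¹) - lam * θ * Real.log (1 + δ) ≤ 1 := by
    have h1 : 0 ≤ θ * a₀ * (y ^ θ * y⁻¹) := by positivity
    have h2 : 0 ≤ Real.log (1 + δ) := Real.log_nonneg (by linarith)
    nlinarith [mul_nonneg (mul_nonneg hlam hθ0.le) h2, mul_nonneg hθ0.le ha₁]
  linarith [hKA y hy, hKB y hy, hKD y hy]
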